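/- Let $W$ be the Weyl group of a Kac-Moody root system with set of positive roots $\Delta_+$, and let $\underline w = s_{i_1} s_{i_2} \cdots s_{i_l}$ be a reduced expression of $w \in W$. Set $\beta_k = s_{i_1}\cdots s_{i_{k-1}}(\alpha_{i_k})$, so $\Delta_+ \cap w\Delta_- = \{\beta_1, \ldots, \beta_l\}$. Then there exists a convex preorder $\preceq$ on $\Delta_+$ such that $\beta_1 \prec \beta_2 \prec \cdots \prec \beta_l \prec \gamma$ for every $\gamma \in \Delta_+ \cap w\Delta_+$. -/

import Mathlib

open scoped BigOperators

/-- `nnspan S` is the set of finite linear combinations of elements of `S`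
with non-negative real coefficients (by convention `nnspan ∅ = {0}`). -/
def nnspan {V : Type*} [AddCommGroup V] [Module ℝ V] (S : Set V) : Set V :=
  {x | ∃ (n : ℕ) (c : Fin n → ℝ) (v : Fin n → V),
    (∀ i, 0 ≤ c i) ∧ (∀ i, v i ∈ S) ∧ x = ∑ i, c i • v i}

/-- Minkowski sum of two subsets of `V`. -/
def setAdd {V : Type*} [AddCommGroup V] [Module ℝ V] (A B : Set V) : Set V :=
  {z | ∃ a ∈ A, ∃ b ∈ B, z = a + b}

/-- Elements of `X` strictly below `x` for the preorder `le`. -/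
def strictBelow {V : Type*} [AddCommGroup V] [Module ℝ V]
    (le : V → V → Prop) (x : V) (X : Set V) : Set V :=
  {y ∈ X | le y x ∧ ¬ le x y}

/-- Elements of `X` strictly above `x` for the preorder `le`. -/
def strictAbove {V : Type*} [AddCommGroup V] [Module ℝ V]
    (le : V → V → Prop) (x : V) (X : Set V) : Set V :=
  {y ∈ X | le x y ∧ ¬ le y x}

/-- The `le`-equivalence class of `x` inside `X`. -/
def eqClass {V : Type*} [AddCommGroup V] [Module ℝ V]
    (le : V → V → Prop) (x : V) (X : Set V) : Set V :=
  {y ∈ X | le x y ∧ le y x}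

/-- A convex preorder on `X ⊆ V \ {0}`: a total preorder on `X` such that for every
equivalence class `𝒞`, the triple (strictly below `𝒞`, `𝒞`, strictly above `𝒞`) is a
face, i.e. for any non-negative combinations `x₋` (of the strictly-below set) and `x₊`
(of the strictly-above set) with `x₋ - x₊ ∈ span ℝ 𝒞`, one has `x₋ = x₊ = 0`. -/
def IsConvexPreorder {V : Type*} [AddCommGroup V] [Module ℝ V]
    (X : Set V) (le : V → V → Prop) : Prop :=
  (∀ x ∈ X, le x x) ∧
  (∀ x ∈ X, ∀ y ∈ X, ∀ z ∈ X, le x y → le y z → le x z) ∧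
  (∀ x ∈ X, ∀ y ∈ X, le x y ∨ le y x) ∧
  (∀ x ∈ X, ∀ xm ∈ nnspan (strictBelow le x X), ∀ xp ∈ nnspan (strictAbove le x X),
    xm - xp ∈ Submodule.span ℝ (eqClass le x X) → xm = 0 ∧ xp = 0)
/-- An abstract (Kac–Moody) root datum: simple roots `α i` in a real vector space `V`,
simple coroots `coroot i` (as linear functionals via the pairing `⟨h_i, ·⟩`), simple
reflections `s i`, and a set of positive roots, with the standard axioms. -/
structure KacMoodyData (I : Type*) (V : Type*) [AddCommGroup V] [Module ℝ V] where
  α : I → V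
  coroot : I → (V →ₗ[ℝ] ℝ)
  s : I → (V ≃ₗ[ℝ] V)
  indep : LinearIndependent ℝ α
  coroot_self : ∀ i, coroot i (α i) = 2
  s_apply : ∀ i (v : V), s i v = v - coroot i v • α i
  posRoots : Set V
  simple_mem : ∀ i, α i ∈ posRoots
  pos_ht : ∀ β ∈ posRoots, ∃ c : I →₀ ℕ, c ≠ 0 ∧ β = c.sum fun i n => (n : ℝ) • α i
  s_perm : ∀ i, ∀ β ∈ posRoots, β ≠ α i → s i β ∈ posRoots

namespace KacMoodyData

variable {I : Type*} {V : Type*} [AddCommGroup V] [Module ℝ V]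

/-- The product `s_{f 0} s_{f 1} ⋯ s_{f (l-1)}` of simple reflections. -/
def wordProd (D : KacMoodyData I V) {l : ℕ} (f : Fin l → I) : V ≃ₗ[ℝ] V :=
  (List.ofFn fun k => D.s (f k)).prod

/-- The length of an element of the Weyl group: the minimal length of an expression
as a product of simple reflections. -/
noncomputable def len (D : KacMoodyData I V) (w : V ≃ₗ[ℝ] V) : ℕ :=
  sInf {l | ∃ f : Fin l → I, w = D.wordProd f}

/-- Membership in the Weyl group (generated by the simple reflections). -/
def InWeyl (D : KacMoodyData I V) (w : V ≃ₗ[ℝ] V) : Prop :=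
  ∃ (l : ℕ) (f : Fin l → I), w = D.wordProd f

/-- The Bruhat order: `v ≤ w` iff some reduced expression of `w` contains a
subexpression equal to `v`. -/
def BruhatLe (D : KacMoodyData I V) (v w : V ≃ₗ[ℝ] V) : Prop :=
  ∃ (l : ℕ) (f : Fin l → I), w = D.wordProd f ∧ D.len w = l ∧
    ∃ (m : ℕ) (g : Fin m → Fin l), StrictMono g ∧ v = D.wordProd (f ∘ g)

/-- The embedding of the positive cone `Q₊` of the root lattice into `V`. -/
def emb (D : KacMoodyData I V) (γ : I →₀ ℕ) : V :=
  γ.sum fun i n => (n : ℝ) • D.α i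

end KacMoodyData


namespace KMC
open KacMoodyData

variable {I : Type*} {V : Type*} [AddCommGroup V] [Module ℝ V] (D : KacMoodyData I V)

/-- Product of the reflections along a list of letters. -/
def lp (L : List I) : V ≃ₗ[ℝ] V := (L.map D.s).prod

@[simp] lemma lp_nil : lp D ([] : List I) = 1 := rfl

@[simp] lemma lp_cons (a : I) (L : List I) : lp D (a :: L) = D.s a * lp D L := by
  simp [lp]

lemma lp_append (L L' : List I) : lp D (L ++ L') = lp D L * lp D L' := by
  simp [lp]

@[simp] lemma lp_singleton (a : I) : lp D [a] = D.s a := by simp [lp]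

lemma mul_app (e f : V ≃ₗ[ℝ] V) (x : V) : (e * f) x = e (f x) := rfl

lemma one_app (x : V) : (1 : V ≃ₗ[ℝ] V) x = x := rfl

lemma s_s (i : I) (x : V) : D.s i (D.s i x) = x := by
  simp only [D.s_apply, map_sub, map_smul, D.coroot_self, smul_eq_mul, sub_smul, mul_smul,
    two_smul, smul_sub]
  module

lemma s_mul_s (i : I) : D.s i * D.s i = 1 :=
  LinearEquiv.toLinearMap_injective (LinearMap.ext fun x => s_s D i x)

lemma s_inv (i : I) : (D.s i)⁻¹ = D.s i :=
  inv_eq_of_mul_eq_one_right (s_mul_s D i)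

lemma s_alpha (i : I) : D.s i (D.α i) = -(D.α i) := by
  rw [D.s_apply, D.coroot_self, two_smul]; abel

lemma wordProd_eq_lp {n : ℕ} (f : Fin n → I) : D.wordProd f = lp D (List.ofFn f) := by
  simp [KacMoodyData.wordProd, lp, List.map_ofFn, Function.comp_def]

/-- A basis of `V` extending the simple roots. -/
noncomputable def bas := Module.Basis.extend ((linearIndepOn_id_range_iff D.indep.injective).mpr D.indep)

lemma α_mem_bset (i : I) : D.α i ∈ ((linearIndepOn_id_range_iff D.indep.injective).mpr D.indep).extend (Set.subset_univ _) :=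
  (Module.Basis.subset_extend ((linearIndepOn_id_range_iff D.indep.injective).mpr D.indep)) (Set.mem_range_self i)

/-- Height functional: sum of coordinates in the extended basis. -/
noncomputable def ht : V →ₗ[ℝ] ℝ := (bas D).sumCoords

lemma ht_α (i : I) : ht D (D.α i) = 1 := by
  have h : bas D ⟨D.α i, α_mem_bset D i⟩ = D.α i := Module.Basis.extend_apply_self _ _
  rw [ht, ← h, Module.Basis.sumCoords_self_apply]

/-- Coordinate functional at a simple root. -/
noncomputable def coordAt (i : I) : V →ₗ[ℝ] ℝ := (bas D).coord ⟨D.α i, α_mem_bset D i⟩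

lemma coordAt_α_self (i : I) : coordAt D i (D.α i) = 1 := by
  have h : bas D ⟨D.α i, α_mem_bset D i⟩ = D.α i := Module.Basis.extend_apply_self _ _
  have h2 : (bas D).coord ⟨D.α i, α_mem_bset D i⟩ (bas D ⟨D.α i, α_mem_bset D i⟩) = 1 := by
    rw [Module.Basis.coord_apply, Module.Basis.repr_self]; simp
  rw [h] at h2
  exact h2

lemma coordAt_α_ne {i j : I} (h : i ≠ j) : coordAt D i (D.α j) = 0 := by
  classical
  have hj : bas D ⟨D.α j, α_mem_bset D j⟩ = D.α j := Module.Basis.extend_apply_self _ _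
  have h2 : (bas D).coord ⟨D.α i, α_mem_bset D i⟩ (bas D ⟨D.α j, α_mem_bset D j⟩) = 0 := by
    rw [Module.Basis.coord_apply, Module.Basis.repr_self, Finsupp.single_apply, if_neg]
    intro hc
    exact h (D.indep.injective (congrArg Subtype.val hc)).symm
  rw [hj] at h2
  exact h2

lemma exists_coord {γ : V} (h : γ ∈ D.posRoots) :
    ∃ c : I →₀ ℕ, c ≠ 0 ∧ γ = c.sum (fun i n => (n : ℝ) • D.α i)
      ∧ (∀ j, coordAt D j γ = c j) ∧ ht D γ = c.sum (fun _ n => (n : ℝ)) := by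
  obtain ⟨c, hc0, hcγ⟩ := D.pos_ht γ h
  refine ⟨c, hc0, hcγ, ?_, ?_⟩
  · intro j
    rw [hcγ, map_finsuppSum]
    rw [Finsupp.sum_eq_single j]
    · simp [coordAt_α_self]
    · intro i _ hij
      simp [coordAt_α_ne D (Ne.symm hij)]
    · simp
  · rw [hcγ, map_finsuppSum]
    congr 1
    ext i n
    simp [ht_α]

lemma ht_pos {γ : V} (h : γ ∈ D.posRoots) : 1 ≤ ht D γ := by
  obtain ⟨c, hc0, -, -, hht⟩ := exists_coord D h
  obtain ⟨i, hi⟩ : ∃ i, c i ≠ 0 := by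
    by_contra hall
    push_neg at hall
    exact hc0 (Finsupp.ext fun i => hall i)
  rw [hht, Finsupp.sum]
  have h1 : (1 : ℝ) ≤ (c i : ℝ) := by exact_mod_cast Nat.one_le_iff_ne_zero.mpr hi
  calc (1:ℝ) ≤ (c i : ℝ) := h1
    _ ≤ _ := Finset.single_le_sum (f := fun j => ((c j : ℝ)))
        (fun j _ => by positivity) (Finsupp.mem_support_iff.mpr hi)

lemma coordAt_nonneg {γ : V} (h : γ ∈ D.posRoots) (j : I) : 0 ≤ coordAt D j γ := by
  obtain ⟨c, -, -, hco, -⟩ := exists_coord D h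
  rw [hco j]; positivity

/-- Negative roots. -/
def NegR : Set V := {x | -x ∈ D.posRoots}

/-- All roots. -/
def Roots : Set V := D.posRoots ∪ NegR D

lemma not_pos_and_neg {γ : V} (h : γ ∈ D.posRoots) (h' : γ ∈ NegR D) : False := by
  have h1 := ht_pos D h
  have h2 := ht_pos D h'
  rw [map_neg] at h2
  linarith

lemma alpha_ne_of_ne {i j : I} (h : i ≠ j) : D.α i ≠ D.α j :=
  fun hc => h (D.indep.injective hc)

lemma s_pos_dichot (i : I) {γ : V} (h : γ ∈ D.posRoots) :
    D.s i γ ∈ D.posRoots ∨ γ = D.α i := by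
  rcases eq_or_ne γ (D.α i) with hc | hc
  · exact Or.inr hc
  · exact Or.inl (D.s_perm i γ h hc)

lemma s_root (i : I) {x : V} (h : x ∈ Roots D) : D.s i x ∈ Roots D := by
  rcases h with h | h
  · rcases s_pos_dichot D i h with h' | rfl
    · exact Or.inl h'
    · right
      show -(D.s i (D.α i)) ∈ D.posRoots
      rw [s_alpha, neg_neg]
      exact D.simple_mem i
  · have h2 : -x ∈ D.posRoots := h
    rcases s_pos_dichot D i h2 with h' | he
    · right
      show -(D.s i x) ∈ D.posRoots
      rw [← map_neg]
      exact h'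
    · left
      have : x = -(D.α i) := by rw [← he]; abel
      rw [this, map_neg, s_alpha, neg_neg]
      exact D.simple_mem i

lemma lp_root (L : List I) {x : V} (h : x ∈ Roots D) : lp D L x ∈ Roots D := by
  induction L with
  | nil => simpa using h
  | cons a L ih => rw [lp_cons, mul_app]; exact s_root D a ih

lemma pos_root (L : List I) {x : V} (h : x ∈ D.posRoots) : lp D L x ∈ Roots D :=
  lp_root D L (Or.inl h)

/-- Cartan integrality: off-diagonal pairings are nonpositive integers. -/
lemma cartan_nat {i j : I} (hij : i ≠ j) : ∃ n : ℕ, D.coroot i (D.α j) = -(n : ℝ) := by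
  have hδ : D.s i (D.α j) ∈ D.posRoots :=
    D.s_perm i (D.α j) (D.simple_mem j) (alpha_ne_of_ne D (Ne.symm hij))
  obtain ⟨c, -, -, hco, -⟩ := exists_coord D hδ
  refine ⟨c i, ?_⟩
  have h2 := hco i
  rw [D.s_apply, map_sub, map_smul, coordAt_α_ne D hij, coordAt_α_self] at h2
  simp only [smul_eq_mul, mul_one, zero_sub] at h2
  linarith [h2]

lemma cartan_zero_symm {i j : I} (hij : i ≠ j) (h : D.coroot i (D.α j) = 0) :
    D.coroot j (D.α i) = 0 := by
  obtain ⟨m, hm⟩ := cartan_nat D (Ne.symm hij)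
  rcases Nat.eq_zero_or_pos m with hm0 | hmpos
  · rw [hm, hm0]; simp
  · exfalso
    set δ := D.s j (D.α i) with hδdef
    have hδ : δ ∈ D.posRoots :=
      D.s_perm j (D.α i) (D.simple_mem i) (alpha_ne_of_ne D hij)
    have hδval : δ = D.α i + (m : ℝ) • D.α j := by
      rw [hδdef, D.s_apply, hm]; module
    have hδne : δ ≠ D.α i := by
      intro hc
      have h1 : coordAt D j δ = 0 := by rw [hc, coordAt_α_ne D (Ne.symm hij)]
      rw [hδval] at h1
      simp [coordAt_α_ne D (Ne.symm hij), coordAt_α_self] at h1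
      omega
    have hε : D.s i δ ∈ D.posRoots := D.s_perm i δ hδ hδne
    have hco2 : D.coroot i δ = 2 := by
      rw [hδval, map_add, map_smul, D.coroot_self, h]; simp
    have hεval : D.s i δ = -(D.α i) + (m : ℝ) • D.α j := by
      rw [D.s_apply, hco2, hδval]; module
    have := coordAt_nonneg D hε i
    rw [hεval] at this
    simp [coordAt_α_ne D hij, coordAt_α_self] at this
    linarith

/-! ### Length machinery -/

lemma inv_eq_symm (e : V ≃ₗ[ℝ] V) : e⁻¹ = e.symm := rfl

lemma len_lp_le (L : List I) : D.len (lp D L) ≤ L.length := by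
  apply Nat.sInf_le
  exact ⟨fun k => L.get k, by rw [wordProd_eq_lp, List.ofFn_get]⟩

lemma exists_reduced {w : V ≃ₗ[ℝ] V} (L₀ : List I) (h : lp D L₀ = w) :
    ∃ L : List I, lp D L = w ∧ L.length = D.len w := by
  have hne : {l | ∃ f : Fin l → I, w = D.wordProd f}.Nonempty :=
    ⟨L₀.length, fun k => L₀.get k, by rw [wordProd_eq_lp, List.ofFn_get, h]⟩
  obtain ⟨f, hf⟩ := Nat.sInf_mem hne
  exact ⟨List.ofFn f, by rw [← wordProd_eq_lp, ← hf], by simp [KacMoodyData.len]⟩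

lemma len_le_of_eq {L L' : List I} (h : lp D L = lp D L') : D.len (lp D L) ≤ L'.length := by
  rw [h]; exact len_lp_le D L'

lemma lp_append_pair (L : List I) (t : I) : lp D (L ++ [t, t]) = lp D L := by
  rw [show L ++ [t, t] = (L ++ [t]) ++ [t] by simp, lp_append, lp_append, lp_singleton,
    mul_assoc, s_mul_s, mul_one]

/-- The list of the roots `β_k` attached to a word. -/
def betas : List I → List V
  | [] => []
  | a :: L => D.α a :: (betas L).map (D.s a)

lemma lp_symm_cons (a : I) (L : List I) (γ : V) :
    (lp D (a :: L)).symm γ = (lp D L).symm (D.s a γ) := by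
  rw [← inv_eq_symm, ← inv_eq_symm, lp_cons, mul_inv_rev, s_inv, mul_app]

lemma noGhost (L : List I) : ∀ {γ : V}, γ ∈ D.posRoots → (lp D L).symm γ ∈ NegR D →
    γ ∈ betas D L := by
  induction L with
  | nil =>
    intro γ hγ h
    simp only [lp_nil] at h
    exact absurd (not_pos_and_neg D hγ h) (fun h => h)
  | cons a L ih =>
    intro γ hγ h
    rw [lp_symm_cons] at h
    rcases eq_or_ne γ (D.α a) with rfl | hne
    · exact List.mem_cons_self
    · have h1 : D.s a γ ∈ D.posRoots := D.s_perm a γ hγ hne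
      have h2 : D.s a γ ∈ betas D L := ih h1 h
      have h3 : γ = D.s a (D.s a γ) := (s_s D a γ).symm
      rw [betas]
      exact List.mem_cons_of_mem _ (h3 ▸ List.mem_map_of_mem (f := D.s a) h2)

/-- The inversion set of `w`. -/
def NSet (w : V ≃ₗ[ℝ] V) : Set V := {γ | γ ∈ D.posRoots ∧ w.symm γ ∈ NegR D}

lemma nset_finite (L : List I) : (NSet D (lp D L)).Finite := by
  apply Set.Finite.subset (List.finite_toSet (betas D L))
  intro γ hγ
  exact noGhost D L hγ.1 hγ.2

lemma nset_one : NSet D (1 : V ≃ₗ[ℝ] V) = ∅ := by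
  ext γ
  simp only [NSet, Set.mem_setOf_eq, Set.mem_empty_iff_false, iff_false, not_and]
  intro hγ h
  exact absurd (not_pos_and_neg D hγ h) (fun h => h)

lemma lp_symm_append_singleton (L : List I) (t : I) (γ : V) :
    (lp D (L ++ [t])).symm γ = D.s t ((lp D L).symm γ) := by
  rw [← inv_eq_symm, ← inv_eq_symm, lp_append, lp_singleton, mul_inv_rev, s_inv, mul_app]

lemma lp_reverse (L : List I) : lp D L.reverse = (lp D L)⁻¹ := by
  induction L with
  | nil => simp
  | cons a L ih =>
    rw [List.reverse_cons, lp_append, lp_singleton, ih, lp_cons, mul_inv_rev, s_inv]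

lemma symm_root (L : List I) {x : V} (h : x ∈ Roots D) : (lp D L).symm x ∈ Roots D := by
  rw [← inv_eq_symm, ← lp_reverse]
  exact lp_root D _ h

lemma nset_update_pos (L : List I) (t : I) (h : lp D L (D.α t) ∈ D.posRoots) :
    NSet D (lp D (L ++ [t])) = insert (lp D L (D.α t)) (NSet D (lp D L))
      ∧ lp D L (D.α t) ∉ NSet D (lp D L) := by
  have hsymmα : (lp D L).symm (lp D L (D.α t)) = D.α t := (lp D L).symm_apply_apply _
  constructor
  · ext γ
    simp only [NSet, Set.mem_setOf_eq, Set.mem_insert_iff]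
    rw [lp_symm_append_singleton]
    constructor
    · rintro ⟨hγ, hn⟩
      rcases symm_root D L (Or.inl hγ) with hδ | hδ
      · left
        have hδt : (lp D L).symm γ = D.α t := by
          rcases s_pos_dichot D t hδ with h1 | h1
          · exact absurd (not_pos_and_neg D h1 hn) (fun h => h)
          · exact h1
        calc γ = lp D L ((lp D L).symm γ) := ((lp D L).apply_symm_apply γ).symm
          _ = lp D L (D.α t) := by rw [hδt]
      · exact Or.inr ⟨hγ, hδ⟩
    · rintro (rfl | ⟨hγ, hδ⟩)
      · refine ⟨h, ?_⟩
        rw [hsymmα, s_alpha]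
        show -(-(D.α t)) ∈ D.posRoots
        rw [neg_neg]; exact D.simple_mem t
      · refine ⟨hγ, ?_⟩
        have hδ' : -((lp D L).symm γ) ∈ D.posRoots := hδ
        rcases s_pos_dichot D t hδ' with h1 | h1
        · show -(D.s t ((lp D L).symm γ)) ∈ D.posRoots
          rw [← map_neg]; exact h1
        · exfalso
          have hγval : γ = -(lp D L (D.α t)) := by
            have : (lp D L).symm γ = -(D.α t) := by
              have := congrArg Neg.neg h1
              rwa [neg_neg] at this
            calc γ = lp D L ((lp D L).symm γ) := ((lp D L).apply_symm_apply γ).symm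
              _ = -(lp D L (D.α t)) := by rw [this, map_neg]
          apply not_pos_and_neg D h
          show -(lp D L (D.α t)) ∈ D.posRoots
          rw [← hγval]; exact hγ
  · rintro ⟨-, hn⟩
    rw [hsymmα] at hn
    exact absurd (not_pos_and_neg D (D.simple_mem t) hn) (fun h => h)

lemma nset_update_neg (L : List I) (t : I) (h : lp D L (D.α t) ∈ NegR D) :
    NSet D (lp D (L ++ [t])) = NSet D (lp D L) \ {-(lp D L (D.α t))}
      ∧ -(lp D L (D.α t)) ∈ NSet D (lp D L) := by
  have hsymmα : (lp D L).symm (lp D L (D.α t)) = D.α t := (lp D L).symm_apply_apply _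
  have hmem : -(lp D L (D.α t)) ∈ NSet D (lp D L) := by
    refine ⟨h, ?_⟩
    show -((lp D L).symm (-(lp D L (D.α t)))) ∈ D.posRoots
    rw [map_neg, hsymmα, neg_neg]
    exact D.simple_mem t
  refine ⟨?_, hmem⟩
  ext γ
  simp only [NSet, Set.mem_setOf_eq, Set.mem_diff, Set.mem_singleton_iff]
  rw [lp_symm_append_singleton]
  constructor
  · rintro ⟨hγ, hn⟩
    rcases symm_root D L (Or.inl hγ) with hδ | hδ
    · exfalso
      rcases s_pos_dichot D t hδ with h1 | h1
      · exact absurd (not_pos_and_neg D h1 hn) (fun h => h)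
      · apply not_pos_and_neg D hγ
        show -γ ∈ D.posRoots
        have : γ = lp D L (D.α t) := by
          calc γ = lp D L ((lp D L).symm γ) := ((lp D L).apply_symm_apply γ).symm
            _ = lp D L (D.α t) := by rw [h1]
        rw [this]; exact h
    · refine ⟨⟨hγ, hδ⟩, ?_⟩
      intro hc
      have hd : (lp D L).symm γ = -(D.α t) := by
        rw [hc, map_neg, hsymmα]
      rw [hd, map_neg, s_alpha, neg_neg] at hn
      exact absurd (not_pos_and_neg D (D.simple_mem t) hn) (fun h => h)
  · rintro ⟨⟨hγ, hδ⟩, hne⟩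
    refine ⟨hγ, ?_⟩
    have hδ' : -((lp D L).symm γ) ∈ D.posRoots := hδ
    rcases s_pos_dichot D t hδ' with h1 | h1
    · show -(D.s t ((lp D L).symm γ)) ∈ D.posRoots
      rw [← map_neg]; exact h1
    · exfalso
      apply hne
      have : (lp D L).symm γ = -(D.α t) := by
        have := congrArg Neg.neg h1
        rwa [neg_neg] at this
      calc γ = lp D L ((lp D L).symm γ) := ((lp D L).apply_symm_apply γ).symm
        _ = -(lp D L (D.α t)) := by rw [this, map_neg]

lemma nset_parity (L : List I) : Even (L.length + (NSet D (lp D L)).ncard) := by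
  induction L using List.reverseRecOn with
  | nil => simp [nset_one]
  | append_singleton L t ih =>
    rcases pos_root D L (D.simple_mem t) with h | h
    · obtain ⟨heq, hnm⟩ := nset_update_pos D L t h
      rw [heq, Set.ncard_insert_of_notMem hnm (nset_finite D L)]
      simp only [List.length_append, List.length_singleton]
      rw [Nat.even_iff] at ih ⊢
      omega
    · obtain ⟨heq, hm⟩ := nset_update_neg D L t h
      rw [heq, Set.ncard_diff_singleton_of_mem hm]
      have hpos : 0 < (NSet D (lp D L)).ncard :=
        Set.ncard_pos (nset_finite D L) |>.mpr ⟨_, hm⟩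
      simp only [List.length_append, List.length_singleton]
      rw [Nat.even_iff] at ih ⊢
      omega

lemma lp_parity {L L' : List I} (h : lp D L = lp D L') : Even (L.length + L'.length) := by
  have h1 := nset_parity D L
  have h2 := nset_parity D L'
  rw [h] at h1
  rw [Nat.even_iff] at h1 h2 ⊢
  omega

lemma len_parity (L : List I) : Even (L.length + D.len (lp D L)) := by
  obtain ⟨R, hR, hRlen⟩ := exists_reduced D L rfl
  rw [← hRlen]
  exact lp_parity D hR.symm

lemma len_append_singleton_le (L : List I) (t : I) :
    D.len (lp D (L ++ [t])) ≤ D.len (lp D L) + 1 := by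
  obtain ⟨R, hR, hRlen⟩ := exists_reduced D L rfl
  have : lp D (R ++ [t]) = lp D (L ++ [t]) := by
    rw [lp_append, lp_append, hR]
  calc D.len (lp D (L ++ [t])) ≤ (R ++ [t]).length := len_le_of_eq D this.symm
    _ = D.len (lp D L) + 1 := by simp [hRlen]

lemma len_le_append_singleton (L : List I) (t : I) :
    D.len (lp D L) ≤ D.len (lp D (L ++ [t])) + 1 := by
  obtain ⟨R, hR, hRlen⟩ := exists_reduced D (L ++ [t]) rfl
  have : lp D (R ++ [t]) = lp D L := by
    rw [lp_append, hR, lp_append, mul_assoc, lp_singleton, s_mul_s, mul_one]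
  calc D.len (lp D L) ≤ (R ++ [t]).length := len_le_of_eq D this.symm
    _ = D.len (lp D (L ++ [t])) + 1 := by simp [hRlen]

lemma len_append_singleton_dichot (L : List I) (t : I) :
    D.len (lp D (L ++ [t])) = D.len (lp D L) + 1 ∨
    D.len (lp D (L ++ [t])) + 1 = D.len (lp D L) := by
  have h1 := len_append_singleton_le D L t
  have h2 := len_le_append_singleton D L t
  have h3 := len_parity D L
  have h4 := len_parity D (L ++ [t])
  simp only [List.length_append, List.length_singleton] at h4
  rw [Nat.even_iff] at h3 h4
  omega

lemma reduced_infix {L₁ L₂ L₃ : List I} (h : D.len (lp D (L₁ ++ L₂ ++ L₃)) =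
    L₁.length + L₂.length + L₃.length) : D.len (lp D L₂) = L₂.length := by
  refine le_antisymm (len_lp_le D L₂) ?_
  by_contra hlt
  push_neg at hlt
  obtain ⟨R, hR, hRlen⟩ := exists_reduced D L₂ rfl
  have heq : lp D (L₁ ++ R ++ L₃) = lp D (L₁ ++ L₂ ++ L₃) := by
    simp only [lp_append, hR]
  have := len_le_of_eq D heq.symm
  rw [h] at this
  simp only [List.length_append] at this
  omega

lemma len_reverse (L : List I) : D.len (lp D L.reverse) = D.len (lp D L) := by
  have key : ∀ L' : List I, D.len (lp D L'.reverse) ≤ D.len (lp D L') := by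
    intro L'
    obtain ⟨R, hR, hRlen⟩ := exists_reduced D L' rfl
    have : lp D R.reverse = lp D L'.reverse := by
      rw [lp_reverse, lp_reverse, hR]
    calc D.len (lp D L'.reverse) ≤ R.reverse.length := len_le_of_eq D this.symm
      _ = D.len (lp D L') := by simp [hRlen]
  refine le_antisymm (key L) ?_
  have := key L.reverse
  rwa [List.reverse_reverse] at this

lemma braid3 (p q : I) (hpq : D.coroot p (D.α q) = -1) (hqp : D.coroot q (D.α p) = -1) :
    D.s q * (D.s p * D.s q) = D.s p * (D.s q * D.s p) := by
  refine LinearEquiv.ext fun x => ?_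
  simp only [mul_app, D.s_apply, map_sub, map_smul, map_add, hpq, hqp, D.coroot_self,
    smul_eq_mul]
  module

lemma braid4 (p q : I) (n n' : ℝ) (hpq : D.coroot p (D.α q) = -n') (hqp : D.coroot q (D.α p) = -n)
    (hc : (n = 1 ∧ n' = 2) ∨ (n = 2 ∧ n' = 1)) :
    D.s p * (D.s q * (D.s p * D.s q)) = D.s q * (D.s p * (D.s q * D.s p)) := by
  rcases hc with ⟨rfl, rfl⟩ | ⟨rfl, rfl⟩ <;>
  · refine LinearEquiv.ext fun x => ?_
    simp only [mul_app, D.s_apply, map_sub, map_smul, map_add, hpq, hqp, D.coroot_self,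
      smul_eq_mul]
    module

lemma braid6 (p q : I) (n n' : ℝ) (hpq : D.coroot p (D.α q) = -n') (hqp : D.coroot q (D.α p) = -n)
    (hc : (n = 1 ∧ n' = 3) ∨ (n = 3 ∧ n' = 1)) :
    D.s p * (D.s q * (D.s p * (D.s q * (D.s p * D.s q))))
      = D.s q * (D.s p * (D.s q * (D.s p * (D.s q * D.s p)))) := by
  rcases hc with ⟨rfl, rfl⟩ | ⟨rfl, rfl⟩ <;>
  · refine LinearEquiv.ext fun x => ?_
    simp only [mul_app, D.s_apply, map_sub, map_smul, map_add, hpq, hqp, D.coroot_self,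
      smul_eq_mul]
    module

lemma braid2 (p q : I) (hpq : D.coroot p (D.α q) = 0) (hqp : D.coroot q (D.α p) = 0) :
    D.s p * D.s q = D.s q * D.s p := by
  refine LinearEquiv.ext fun x => ?_
  simp only [mul_app, D.s_apply, map_sub, map_smul, map_add, hpq, hqp, D.coroot_self,
    smul_eq_mul]
  module

/-! ### Alternating words -/

variable {Itype : Type*}

/-- Letter at position `r` of the alternating word (1-indexed, position 1 = `q`). -/
def tlet (p q : I) (r : ℕ) : I := if r % 2 = 0 then p else q

/-- Alternating word `[t_r, …, t_2, t_1]` with `t_1 = q`. -/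
def altL (p q : I) : ℕ → List I
  | 0 => []
  | r+1 => tlet p q (r+1) :: altL p q r

@[simp] lemma altL_zero (p q : I) : altL p q 0 = [] := rfl

lemma altL_succ (p q : I) (r : ℕ) : altL p q (r+1) = tlet p q (r+1) :: altL p q r := rfl

lemma altL_length (p q : I) (r : ℕ) : (altL p q r).length = r := by
  induction r with
  | zero => rfl
  | succ r ih => simp [altL_succ, ih]

lemma tlet_shift (p q : I) (r : ℕ) : tlet p q (r+2) = tlet q p (r+1) := by
  rcases Nat.mod_two_eq_zero_or_one r with hr | hr
  · rw [tlet, tlet, if_pos (by omega : (r+2) % 2 = 0), if_neg (by omega : ¬((r+1) % 2 = 0))]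
  · rw [tlet, tlet, if_neg (by omega : ¬((r+2) % 2 = 0)), if_pos (by omega : (r+1) % 2 = 0)]

lemma altL_succ_right (p q : I) (r : ℕ) : altL p q (r+1) = altL q p r ++ [q] := by
  induction r with
  | zero => simp [altL_succ, tlet]
  | succ r ih =>
    rw [altL_succ, ih]
    rw [show altL q p (r+1) = tlet q p (r+1) :: altL q p r from rfl]
    rw [tlet_shift]
    simp

/-- Coefficient pair of the alternating root chain. -/
def AB (n n' : ℝ) : ℕ → ℝ × ℝ
  | 0 => (1, 0)
  | r+1 => if (r+1) % 2 = 0 then ((n' * (AB n n' r).2 - (AB n n' r).1, (AB n n' r).2) : ℝ × ℝ)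
      else ((AB n n' r).1, n * (AB n n' r).1 - (AB n n' r).2)

lemma s_comb_p (p q : I) (n' A B : ℝ) (hpq : D.coroot p (D.α q) = -n') :
    D.s p (A • D.α p + B • D.α q) = (n' * B - A) • D.α p + B • D.α q := by
  rw [D.s_apply, map_add, map_smul, map_smul, D.coroot_self, hpq, smul_eq_mul, smul_eq_mul]
  module

lemma s_comb_q (p q : I) (n A B : ℝ) (hqp : D.coroot q (D.α p) = -n) :
    D.s q (A • D.α p + B • D.α q) = A • D.α p + (n * A - B) • D.α q := by
  rw [D.s_apply, map_add, map_smul, map_smul, D.coroot_self, hqp, smul_eq_mul, smul_eq_mul]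
  module

lemma AB_succ (n n' : ℝ) (r : ℕ) :
    AB n n' (r+1) = if (r+1) % 2 = 0 then ((n' * (AB n n' r).2 - (AB n n' r).1, (AB n n' r).2) : ℝ × ℝ)
      else ((AB n n' r).1, n * (AB n n' r).1 - (AB n n' r).2) := rfl

lemma xi_AB (p q : I) (n n' : ℝ) (hpq : D.coroot p (D.α q) = -n')
    (hqp : D.coroot q (D.α p) = -n) (r : ℕ) :
    lp D (altL p q r) (D.α p) = (AB n n' r).1 • D.α p + (AB n n' r).2 • D.α q := by
  induction r with
  | zero => simp [AB]
  | succ r ih =>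
    rw [altL_succ, lp_cons, mul_app, ih, AB_succ]
    rcases Nat.mod_two_eq_zero_or_one (r+1) with h | h
    · rw [if_pos h, tlet, if_pos h, s_comb_p D p q n' _ _ hpq]
    · rw [if_neg (by omega), tlet, if_neg (by omega), s_comb_q D p q n _ _ hqp]

/-- Dihedral order for small products. -/
def mDih (c : ℕ) : ℕ := if c = 0 then 2 else if c = 1 then 3 else if c = 2 then 4 else 6

lemma AB_invariant (n n' : ℝ) (hn : 1 ≤ n) (hn' : 1 ≤ n') (h4 : 4 ≤ n * n') (r : ℕ) :
    1 ≤ (AB n n' r).1 ∧ 0 ≤ (AB n n' r).2 ∧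
      (r % 2 = 1 → 2 * (AB n n' r).1 ≤ n' * (AB n n' r).2) ∧
      (r % 2 = 0 → 2 * (AB n n' r).2 ≤ n * (AB n n' r).1) := by
  induction r with
  | zero => refine ⟨le_refl _, le_refl _, by omega, fun _ => by simp [AB]; nlinarith⟩
  | succ r ih =>
    obtain ⟨hA, hB, hodd, heven⟩ := ih
    rcases Nat.mod_two_eq_zero_or_one (r+1) with h | h
    · -- r+1 even, r odd
      have hro : r % 2 = 1 := by omega
      have h2 := hodd hro
      rw [AB_succ, if_pos h]
      refine ⟨by simp only; nlinarith, by simpa using hB, fun hc => by omega,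
        fun _ => by simp only; nlinarith⟩
    · have hro : r % 2 = 0 := by omega
      have h2 := heven hro
      rw [AB_succ, if_neg (by omega)]
      refine ⟨by simpa using hA, by simp only; nlinarith,
        fun _ => by simp only; nlinarith, fun hc => by omega⟩

lemma coord_pos (p q : I) (n n' : ℕ)
    (hpq : D.coroot p (D.α q) = -(n' : ℝ)) (hqp : D.coroot q (D.α p) = -(n : ℝ))
    (r : ℕ) (hr : 4 ≤ n * n' ∨ r < mDih (n * n')) :
    ∃ A B : ℝ, 0 ≤ A ∧ 0 ≤ B ∧ 1 ≤ A + B ∧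
      lp D (altL p q r) (D.α p) = A • D.α p + B • D.α q := by
  have hcast : ((n * n' : ℕ) : ℝ) = (n:ℝ) * (n':ℝ) := by push_cast; ring
  suffices h : 0 ≤ (AB (n:ℝ) (n':ℝ) r).1 ∧ 0 ≤ (AB (n:ℝ) (n':ℝ) r).2 ∧
      1 ≤ (AB (n:ℝ) (n':ℝ) r).1 + (AB (n:ℝ) (n':ℝ) r).2 by
    exact ⟨_, _, h.1, h.2.1, h.2.2, xi_AB D p q _ _ hpq hqp r⟩
  by_cases hc4 : 4 ≤ n * n'
  · have h1 : (1:ℝ) ≤ (n:ℝ) := by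
      have : 1 ≤ n := by by_contra h; push_neg at h; interval_cases n <;> omega
      exact_mod_cast this
    have h2 : (1:ℝ) ≤ (n':ℝ) := by
      have : 1 ≤ n' := by by_contra h; push_neg at h; interval_cases n' <;> omega
      exact_mod_cast this
    have h3 : (4:ℝ) ≤ (n:ℝ) * (n':ℝ) := by
      rw [← hcast]; exact_mod_cast hc4
    obtain ⟨hA, hB, -, -⟩ := AB_invariant (n:ℝ) (n':ℝ) h1 h2 h3 r
    exact ⟨by linarith, hB, by linarith⟩
  · have hr' : r < mDih (n * n') := by tauto
    have hc3 : n * n' ≤ 3 := by omega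
    have hr6 : r < 6 := by
      have : mDih (n * n') ≤ 6 := by unfold mDih; split_ifs <;> omega
      omega
    interval_cases r
    · norm_num [AB]
    · refine ⟨by norm_num [AB_succ, AB], ?_, ?_⟩ <;> norm_num [AB_succ, AB] <;> positivity
    · have hc1 : 1 ≤ n * n' := by
        rcases Nat.eq_zero_or_pos (n * n') with h0 | h0
        · rw [h0] at hr'; norm_num [mDih] at hr'
        · exact h0
      have hn1 : 1 ≤ n := by
        rcases Nat.eq_zero_or_pos n with h0 | h0
        · rw [h0] at hc1; simp at hc1
        · exact h0
      have hn'1 : 1 ≤ n' := by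
        rcases Nat.eq_zero_or_pos n' with h0 | h0
        · rw [h0] at hc1; simp at hc1
        · exact h0
      have hnle : n ≤ 3 := by nlinarith
      have hn'le : n' ≤ 3 := by nlinarith
      interval_cases n <;> interval_cases n' <;>
        first
          | omega
          | (norm_num [mDih] at hr'; done)
          | (refine ⟨?_, ?_, ?_⟩ <;> norm_num [AB_succ, AB])
    · have hc1 : 1 ≤ n * n' := by
        rcases Nat.eq_zero_or_pos (n * n') with h0 | h0
        · rw [h0] at hr'; norm_num [mDih] at hr'
        · exact h0
      have hn1 : 1 ≤ n := by
        rcases Nat.eq_zero_or_pos n with h0 | h0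
        · rw [h0] at hc1; simp at hc1
        · exact h0
      have hn'1 : 1 ≤ n' := by
        rcases Nat.eq_zero_or_pos n' with h0 | h0
        · rw [h0] at hc1; simp at hc1
        · exact h0
      have hnle : n ≤ 3 := by nlinarith
      have hn'le : n' ≤ 3 := by nlinarith
      interval_cases n <;> interval_cases n' <;>
        first
          | omega
          | (norm_num [mDih] at hr'; done)
          | (refine ⟨?_, ?_, ?_⟩ <;> norm_num [AB_succ, AB])
    · have hc1 : 1 ≤ n * n' := by
        rcases Nat.eq_zero_or_pos (n * n') with h0 | h0
        · rw [h0] at hr'; norm_num [mDih] at hr'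
        · exact h0
      have hn1 : 1 ≤ n := by
        rcases Nat.eq_zero_or_pos n with h0 | h0
        · rw [h0] at hc1; simp at hc1
        · exact h0
      have hn'1 : 1 ≤ n' := by
        rcases Nat.eq_zero_or_pos n' with h0 | h0
        · rw [h0] at hc1; simp at hc1
        · exact h0
      have hnle : n ≤ 3 := by nlinarith
      have hn'le : n' ≤ 3 := by nlinarith
      interval_cases n <;> interval_cases n' <;>
        first
          | omega
          | (norm_num [mDih] at hr'; done)
          | (refine ⟨?_, ?_, ?_⟩ <;> norm_num [AB_succ, AB])
    · have hc1 : 1 ≤ n * n' := by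
        rcases Nat.eq_zero_or_pos (n * n') with h0 | h0
        · rw [h0] at hr'; norm_num [mDih] at hr'
        · exact h0
      have hn1 : 1 ≤ n := by
        rcases Nat.eq_zero_or_pos n with h0 | h0
        · rw [h0] at hc1; simp at hc1
        · exact h0
      have hn'1 : 1 ≤ n' := by
        rcases Nat.eq_zero_or_pos n' with h0 | h0
        · rw [h0] at hc1; simp at hc1
        · exact h0
      have hnle : n ≤ 3 := by nlinarith
      have hn'le : n' ≤ 3 := by nlinarith
      interval_cases n <;> interval_cases n' <;>
        first
          | omega
          | (norm_num [mDih] at hr'; done)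
          | (refine ⟨?_, ?_, ?_⟩ <;> norm_num [AB_succ, AB])

lemma braid_altL (p q : I) (hpq : p ≠ q) (n n' : ℕ)
    (hn' : D.coroot p (D.α q) = -(n' : ℝ)) (hn : D.coroot q (D.α p) = -(n : ℝ))
    (hc3 : n * n' ≤ 3) :
    lp D (altL p q (mDih (n * n'))) = lp D (altL q p (mDih (n * n'))) := by
  have e2 : ∀ a b : I, altL a b 2 = [a, b] := by intro a b; norm_num [altL, tlet]
  have e3 : ∀ a b : I, altL a b 3 = [b, a, b] := by intro a b; norm_num [altL, tlet]
  have e4 : ∀ a b : I, altL a b 4 = [a, b, a, b] := by intro a b; norm_num [altL, tlet]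
  have e6 : ∀ a b : I, altL a b 6 = [a, b, a, b, a, b] := by intro a b; norm_num [altL, tlet]
  rcases Nat.eq_zero_or_pos (n * n') with hc | hcpos
  · -- both Cartan entries vanish
    have h0 : D.coroot p (D.α q) = 0 ∧ D.coroot q (D.α p) = 0 := by
      have : n = 0 ∨ n' = 0 := by
        rcases Nat.eq_zero_or_pos n with h | h
        · exact Or.inl h
        · right; nlinarith
      rcases this with h | h
      · have hqp0 : D.coroot q (D.α p) = 0 := by rw [hn, h]; norm_num
        exact ⟨cartan_zero_symm D (Ne.symm hpq) hqp0, hqp0⟩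
      · have hpq0 : D.coroot p (D.α q) = 0 := by rw [hn', h]; norm_num
        exact ⟨hpq0, cartan_zero_symm D hpq hpq0⟩
    rw [hc, show mDih 0 = 2 from by norm_num [mDih], e2, e2]
    simp only [lp_cons, lp_singleton]
    exact braid2 D p q h0.1 h0.2
  · have hn1 : 1 ≤ n := by
      rcases Nat.eq_zero_or_pos n with h | h
      · rw [h] at hcpos; simp at hcpos
      · exact h
    have hn'1 : 1 ≤ n' := by
      rcases Nat.eq_zero_or_pos n' with h | h
      · rw [h] at hcpos; simp at hcpos
      · exact h
    have hnle : n ≤ 3 := by nlinarith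
    have hn'le : n' ≤ 3 := by nlinarith
    interval_cases n <;> interval_cases n' <;>
      first
        | omega
        | (norm_num at hn hn'
           rw [show (mDih _ : ℕ) = 3 from by norm_num [mDih], e3, e3]
           simp only [lp_cons, lp_singleton]
           exact braid3 D p q hn' hn)
        | (norm_num at hn hn'
           rw [show (mDih _ : ℕ) = 4 from by norm_num [mDih], e4, e4]
           simp only [lp_cons, lp_singleton]
           first
             | exact braid4 D p q 1 2 hn' hn (Or.inl ⟨rfl, rfl⟩)
             | exact braid4 D p q 2 1 hn' hn (Or.inr ⟨rfl, rfl⟩))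
        | (norm_num at hn hn'
           rw [show (mDih _ : ℕ) = 6 from by norm_num [mDih], e6, e6]
           simp only [lp_cons, lp_singleton]
           first
             | exact braid6 D p q 1 3 hn' hn (Or.inl ⟨rfl, rfl⟩)
             | exact braid6 D p q 3 1 hn' hn (Or.inr ⟨rfl, rfl⟩))

lemma reduced_prefix {L₂ L₃ : List I} (h : D.len (lp D (L₂ ++ L₃)) = L₂.length + L₃.length) :
    D.len (lp D L₂) = L₂.length := by
  have := reduced_infix D (L₁ := []) (L₂ := L₂) (L₃ := L₃)
  simp only [List.nil_append, List.length_nil, Nat.zero_add] at this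
  exact this h

lemma AUX (M : ℕ)
    (IH : ∀ m' : ℕ, m' < M → ∀ (L : List I) (p : I), L.length = m' →
      D.len (lp D L) = m' → D.len (lp D (L ++ [p])) = m' + 1 → lp D L (D.α p) ∈ D.posRoots)
    (p q : I) (hpq : p ≠ q) (n n' : ℕ)
    (hn' : D.coroot p (D.α q) = -(n' : ℝ)) (hn : D.coroot q (D.α p) = -(n : ℝ)) :
    ∀ j : ℕ, ∀ r : ℕ, ∀ Lv : List I, 1 ≤ r → Lv.length = j → j + r = M →
      D.len (lp D Lv) = j →
      D.len (lp D (Lv ++ altL p q r)) = M →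
      D.len (lp D ((Lv ++ altL p q r) ++ [p])) = M + 1 →
      (4 ≤ n * n' ∨ r < mDih (n * n')) →
      lp D (Lv ++ altL p q r) (D.α p) ∈ D.posRoots := by
  intro j
  induction j using Nat.strong_induction_on with
  | _ j IHj =>
  intro r Lv hr1 hLvlen hjr hlenv hu hup hinv
  rcases len_append_singleton_dichot D Lv (tlet p q (r+1)) with hwin | hdes
  · -- WIN case
    rw [hlenv] at hwin
    obtain ⟨r0, rfl⟩ : ∃ r0, r = r0 + 1 := ⟨r - 1, by omega⟩
    have hsplit : Lv ++ altL p q (r0+1) = (Lv ++ [tlet p q (r0+1)]) ++ altL p q r0 := by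
      rw [altL_succ]; simp
    have hpre' : D.len (lp D (Lv ++ [tlet p q (r0+1)])) = (Lv ++ [tlet p q (r0+1)]).length := by
      apply reduced_prefix D (L₃ := altL p q r0)
      rw [← hsplit, hu]
      simp only [List.length_append, List.length_singleton, altL_length, hLvlen]
      omega
    have hpre : D.len (lp D (Lv ++ [tlet p q (r0+1)])) = j + 1 := by
      rw [hpre']
      simp [hLvlen]
    have hboth : D.len (lp D (Lv ++ [p])) = j + 1 ∧ D.len (lp D (Lv ++ [q])) = j + 1 := by
      rcases Nat.mod_two_eq_zero_or_one r0 with h0 | h0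
      · have e1 : tlet p q (r0+1) = q := by rw [tlet, if_neg]; omega
        have e2 : tlet p q (r0+1+1) = p := by rw [tlet, if_pos]; omega
        rw [e1] at hpre; rw [e2] at hwin
        exact ⟨hwin, hpre⟩
      · have e1 : tlet p q (r0+1) = p := by rw [tlet, if_pos]; omega
        have e2 : tlet p q (r0+1+1) = q := by rw [tlet, if_neg]; omega
        rw [e1] at hpre; rw [e2] at hwin
        exact ⟨hpre, hwin⟩
    have hvp : lp D Lv (D.α p) ∈ D.posRoots :=
      IH j (by omega) Lv p hLvlen hlenv hboth.1
    have hvq : lp D Lv (D.α q) ∈ D.posRoots :=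
      IH j (by omega) Lv q hLvlen hlenv hboth.2
    obtain ⟨A, B, hA, hB, hAB, hxi⟩ := coord_pos D p q n n' hn' hn (r0+1) hinv
    have hval : lp D (Lv ++ altL p q (r0+1)) (D.α p)
        = A • (lp D Lv (D.α p)) + B • (lp D Lv (D.α q)) := by
      rw [lp_append, mul_app, hxi, map_add, map_smul, map_smul]
    rcases pos_root D (Lv ++ altL p q (r0+1)) (D.simple_mem p) with h | h
    · exact h
    · exfalso
      have h1 := ht_pos D h
      rw [map_neg] at h1
      have h2 : 1 ≤ ht D (lp D (Lv ++ altL p q (r0+1)) (D.α p)) := by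
        rw [hval, map_add, map_smul, map_smul, smul_eq_mul, smul_eq_mul]
        nlinarith [ht_pos D hvp, ht_pos D hvq]
      linarith
  · -- DESCEND case
    rw [hlenv] at hdes
    have hj1 : 1 ≤ j := by omega
    obtain ⟨Lv', hLv'eq, hLv'len⟩ := exists_reduced D (Lv ++ [tlet p q (r+1)]) rfl
    have hlen' : Lv'.length = j - 1 := by rw [hLv'len]; omega
    have hlenv' : D.len (lp D Lv') = j - 1 := by
      rw [hLv'eq]; omega
    have hkey : lp D (Lv' ++ altL p q (r+1)) = lp D (Lv ++ altL p q r) := by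
      rw [lp_append, lp_append, hLv'eq, altL_succ, lp_cons, lp_append, lp_singleton,
        mul_assoc, ← mul_assoc (D.s (tlet p q (r+1))) (D.s (tlet p q (r+1))) (lp D (altL p q r)),
        s_mul_s, one_mul]
    by_cases hbr : n * n' ≤ 3 ∧ r + 1 = mDih (n * n')
    · -- braid contradiction
      exfalso
      obtain ⟨hc3, hmd⟩ := hbr
      have hbraid : lp D (altL p q (r+1)) = lp D (altL q p (r+1)) := by
        rw [hmd]; exact braid_altL D p q hpq n n' hn' hn hc3
      have hsr : altL q p (r+1) = altL p q r ++ [p] := altL_succ_right q p r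
      have hfin : lp D ((Lv ++ altL p q r) ++ [p]) = lp D (Lv' ++ altL p q r) := by
        rw [lp_append D (Lv ++ altL p q r) [p], lp_singleton, ← hkey,
          lp_append D Lv' (altL p q (r+1)), hbraid, hsr,
          lp_append D (altL p q r) [p], lp_singleton,
          lp_append D Lv' (altL p q r),
          mul_assoc (lp D Lv') (lp D (altL p q r) * D.s p) (D.s p),
          mul_assoc (lp D (altL p q r)) (D.s p) (D.s p), s_mul_s, mul_one]
      have hle := len_le_of_eq D hfin
      rw [hup] at hle
      simp only [List.length_append, altL_length, hlen'] at hle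
      omega
    · -- recurse
      have hinv' : 4 ≤ n * n' ∨ r + 1 < mDih (n * n') := by
        rcases hinv with h | h
        · exact Or.inl h
        · by_cases hc3 : n * n' ≤ 3
          · right
            rcases Nat.lt_or_ge (r+1) (mDih (n * n')) with h' | h'
            · exact h'
            · exfalso; exact hbr ⟨hc3, by omega⟩
          · left; omega
      have hres := IHj (j-1) (by omega) (r+1) Lv' (by omega) hlen' (by omega) hlenv'
        (by rw [hkey]; exact hu)
        (by rw [lp_append D (Lv' ++ altL p q (r+1)) [p], hkey,
              ← lp_append D (Lv ++ altL p q r) [p]]; exact hup) hinv'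
      rw [hkey] at hres
      exact hres

/-- Tits-type sign lemma: if appending `p` to a reduced word increases length,
the word maps `α p` to a positive root. -/
lemma TL : ∀ m : ℕ, ∀ (L : List I) (p : I), L.length = m →
    D.len (lp D L) = m → D.len (lp D (L ++ [p])) = m + 1 →
    lp D L (D.α p) ∈ D.posRoots := by
  intro m
  induction m using Nat.strong_induction_on with
  | _ m IH =>
  intro L p hLlen hlen hlenp
  rcases List.eq_nil_or_concat L with rfl | ⟨L', t, rfl⟩
  · simpa using D.simple_mem p
  · rw [List.concat_eq_append] at hLlen hlen hlenp ⊢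
    by_cases htp : t = p
    · exfalso
      subst htp
      have h2 : lp D ((L' ++ [t]) ++ [t]) = lp D L' := by
        rw [show (L' ++ [t]) ++ [t] = L' ++ [t, t] by simp]
        exact lp_append_pair D L' t
      have hle := len_le_of_eq D h2
      rw [hlenp] at hle
      have hle2 := len_lp_le D L'
      simp only [List.length_append, List.length_singleton] at hLlen
      omega
    · obtain ⟨n, hn⟩ := cartan_nat D (show t ≠ p from htp)
      obtain ⟨n', hn'⟩ := cartan_nat D (show p ≠ t from Ne.symm htp)
      simp only [List.length_append, List.length_singleton] at hLlen
      have hlenL' : D.len (lp D L') = m - 1 := by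
        have h3 := reduced_prefix D (L₂ := L') (L₃ := [t])
          (by simp only [List.length_append, List.length_singleton]; rw [hlen]; omega)
        omega
      have halt : L' ++ altL p t 1 = L' ++ [t] := by
        norm_num [altL, tlet]
      have hres := AUX D m IH p t (Ne.symm htp) n n' hn' hn (m-1) 1 L' le_rfl (by omega)
        (by omega) hlenL'
        (by rw [halt]; exact hlen)
        (by rw [halt]; exact hlenp)
        (by right; unfold mDih; split_ifs <;> omega)
      rw [halt] at hres
      exact hres

lemma symm_mul (u v : V ≃ₗ[ℝ] V) (x : V) : (u * v).symm x = v.symm (u.symm x) := rfl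

lemma betas_to_bvec (L : List I) : ∀ {x : V}, x ∈ betas D L →
    ∃ (k : ℕ) (h : k < L.length), x = lp D (L.take k) (D.α (L.get ⟨k, h⟩)) := by
  induction L with
  | nil => intro x hx; simp [betas] at hx
  | cons a L ih =>
    intro x hx
    rw [betas] at hx
    rcases List.mem_cons.mp hx with rfl | hx'
    · exact ⟨0, by simp, by simp [one_app]⟩
    · obtain ⟨y, hy, rfl⟩ := List.mem_map.mp hx'
      obtain ⟨k, hk, hval⟩ := ih hy
      refine ⟨k+1, by simpa using hk, ?_⟩
      have h1 : (a :: L).take (k+1) = a :: L.take k := rfl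
      have h2 : (a :: L).get ⟨k+1, by simpa using hk⟩ = L.get ⟨k, hk⟩ := rfl
      rw [h1, h2, lp_cons, mul_app, hval]

lemma seg_red (c : List I) (hredc : D.len (lp D c) = c.length) (a b : ℕ)
    (hab : a ≤ b) (hbl : b ≤ c.length) :
    D.len (lp D ((c.drop a).take (b - a))) = b - a := by
  have h1 : c.take b = c.take a ++ (c.drop a).take (b - a) := by
    rw [← List.take_add]
    congr 1
    omega
  have hdecomp : c = c.take a ++ (c.drop a).take (b - a) ++ c.drop b := by
    rw [← h1, List.take_append_drop]
  have h2 := reduced_infix D (L₁ := c.take a) (L₂ := (c.drop a).take (b - a))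
    (L₃ := c.drop b)
  have h3 : D.len (lp D (c.take a ++ (c.drop a).take (b - a) ++ c.drop b)) =
      (c.take a).length + ((c.drop a).take (b - a)).length + (c.drop b).length := by
    rw [← hdecomp, hredc]
    simp only [List.length_take, List.length_drop]
    omega
  have h4 := h2 h3
  rw [h4]
  simp only [List.length_take, List.length_drop]
  omega

lemma drop_red (c : List I) (hredc : D.len (lp D c) = c.length) (p : ℕ) (hp : p ≤ c.length) :
    D.len (lp D (c.drop p)) = (c.drop p).length := by
  have hdp : (c.drop p).take (c.length - p) = c.drop p :=
    List.take_of_length_le (by simp [List.length_drop])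
  have h := seg_red D c hredc p c.length hp le_rfl
  rw [hdp] at h
  rw [h]
  simp [List.length_drop]

lemma take_red (c : List I) (hredc : D.len (lp D c) = c.length) (p : ℕ) (hp : p ≤ c.length) :
    D.len (lp D (c.take p)) = p := by
  have h := seg_red D c hredc 0 p (by omega) hp
  simpa using h

lemma bvec_pos (c : List I) (hredc : D.len (lp D c) = c.length) (k : ℕ) (h : k < c.length) :
    lp D (c.take k) (D.α (c.get ⟨k, h⟩)) ∈ D.posRoots := by
  apply TL D k (c.take k) _ (by simp [List.length_take]; omega)
  · exact take_red D c hredc k (by omega)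
  · have h1 : c.take k ++ [c.get ⟨k, h⟩] = c.take (k+1) := by
      simpa using List.take_concat_get' c k h
    rw [h1]
    exact take_red D c hredc (k+1) (by omega)

lemma R1pos (c : List I) (hredc : D.len (lp D c) = c.length) (k : ℕ) (h : k < c.length)
    (p : ℕ) (hp : p ≤ k) :
    (lp D (c.take p)).symm (lp D (c.take k) (D.α (c.get ⟨k, h⟩))) ∈ D.posRoots := by
  have hdecomp : c.take k = c.take p ++ (c.drop p).take (k - p) := by
    rw [← List.take_add]; congr 1; omega
  rw [hdecomp, lp_append, mul_app, LinearEquiv.symm_apply_apply]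
  have hget : c.get ⟨k, h⟩ = (c.drop p).get ⟨k - p, by simp [List.length_drop]; omega⟩ := by
    simp only [List.get_eq_getElem, List.getElem_drop]
    congr 1
    omega
  rw [hget]
  exact bvec_pos D (c.drop p) (drop_red D c hredc p (by omega)) (k - p)
    (by simp [List.length_drop]; omega)

lemma R1neg (c : List I) (hredc : D.len (lp D c) = c.length) (k : ℕ) (h : k < c.length)
    (p : ℕ) (hkp : k < p) (hpl : p ≤ c.length) :
    (lp D (c.take p)).symm (lp D (c.take k) (D.α (c.get ⟨k, h⟩))) ∈ NegR D := by
  set g := c.get ⟨k, h⟩ with hg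
  set S' := (c.drop (k+1)).take (p - (k+1)) with hS'
  have hslice : (c.drop k).take (p - k) = g :: S' := by
    rw [List.drop_eq_getElem_cons h]
    have he : p - k = (p - (k+1)) + 1 := by omega
    rw [he, List.take_succ_cons]
    rfl
  have hdecomp : c.take p = c.take k ++ (g :: S') := by
    rw [← hslice, ← List.take_add]
    congr 1
    omega
  rw [hdecomp, lp_append, symm_mul, LinearEquiv.symm_apply_apply, lp_symm_cons]
  rw [s_alpha, map_neg]
  show -(-((lp D S').symm (D.α g))) ∈ D.posRoots
  rw [neg_neg]
  have hrev : (lp D S').symm = ⇑(lp D S'.reverse) := by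
    rw [lp_reverse, inv_eq_symm]
  rw [show (lp D S').symm (D.α g) = lp D S'.reverse (D.α g) from congrFun hrev _]
  -- now apply TL to S'.reverse and letter g
  have hS'len : S'.length = p - (k+1) := by
    simp [hS', List.length_take, List.length_drop]
    omega
  have hlen1 : D.len (lp D S'.reverse) = p - (k+1) := by
    rw [len_reverse]
    rw [hS']
    have := seg_red D c hredc (k+1) p (by omega) hpl
    exact this
  have hlen2 : D.len (lp D (S'.reverse ++ [g])) = (p - (k+1)) + 1 := by
    have he : S'.reverse ++ [g] = (g :: S').reverse := by simp
    rw [he, len_reverse, ← hslice]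
    have := seg_red D c hredc k p (by omega) hpl
    rw [this]
    omega
  apply TL D (p - (k+1)) S'.reverse g (by simp [hS'len]) hlen1 hlen2

lemma R2tail (c : List I) (hredc : D.len (lp D c) = c.length) {γ : V}
    (hγ : γ ∈ D.posRoots) (htail : (lp D c).symm γ ∈ D.posRoots)
    (p : ℕ) (hp : p ≤ c.length) :
    (lp D (c.take p)).symm γ ∈ D.posRoots := by
  rcases symm_root D (c.take p) (Or.inl hγ) with h | h
  · exact h
  · exfalso
    have hbet := noGhost D (c.take p) hγ h
    obtain ⟨k, hk, hval⟩ := betas_to_bvec D (c.take p) hbet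
    have hkp : k < p := by
      have := hk
      simp [List.length_take] at this
      omega
    have hkc : k < c.length := by
      have := hk
      simp [List.length_take] at this
      omega
    have htake : (c.take p).take k = c.take k := by
      rw [List.take_take]
      congr 1
      omega
    have hgete : (c.take p).get ⟨k, hk⟩ = c.get ⟨k, hkc⟩ := by
      simp [List.get_eq_getElem, List.getElem_take]
    rw [htake, hgete] at hval
    have hneg := R1neg D c hredc k hkc c.length hkc le_rfl
    rw [List.take_length] at hneg
    rw [hval] at htail
    exact not_pos_and_neg D htail hneg

lemma face_generic (X : Set V) (F : V → ℝ) (x : V) (H : V →ₗ[ℝ] ℝ)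
    (hsign : ∀ y ∈ X, (F y < F x → H y < 0) ∧ (F y = F x → H y = 0) ∧ (F x < F y → 0 < H y)) :
    ∀ xm ∈ nnspan (strictBelow (fun u v => F u ≤ F v) x X),
      ∀ xp ∈ nnspan (strictAbove (fun u v => F u ≤ F v) x X),
        xm - xp ∈ Submodule.span ℝ (eqClass (fun u v => F u ≤ F v) x X) →
        xm = 0 ∧ xp = 0 := by
  intro xm hxm xp hxp hspan
  obtain ⟨nm, cm, vm, hcm, hvm, hxmval⟩ := hxm
  obtain ⟨np, cp, vp, hcp, hvp, hxpval⟩ := hxp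
  have hHm : ∀ t, H (vm t) < 0 := by
    intro t
    obtain ⟨hy, h1, h2⟩ := hvm t
    exact (hsign _ hy).1 (lt_of_le_not_ge h1 h2)
  have hHp : ∀ t, 0 < H (vp t) := by
    intro t
    obtain ⟨hy, h1, h2⟩ := hvp t
    exact (hsign _ hy).2.2 (lt_of_le_not_ge h1 h2)
  have hker : Submodule.span ℝ (eqClass (fun u v => F u ≤ F v) x X) ≤ LinearMap.ker H := by
    rw [Submodule.span_le]
    rintro y ⟨hy, h1, h2⟩
    simp only [SetLike.mem_coe, LinearMap.mem_ker]
    exact (hsign _ hy).2.1 (le_antisymm h2 h1)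
  have h0 : H xm = H xp := by
    have hk := hker hspan
    rw [LinearMap.mem_ker, map_sub, sub_eq_zero] at hk
    exact hk
  have hmv : H xm = ∑ t, cm t * H (vm t) := by
    rw [hxmval, map_sum]
    congr 1
    ext t
    rw [map_smul, smul_eq_mul]
  have hpv : H xp = ∑ t, cp t * H (vp t) := by
    rw [hxpval, map_sum]
    congr 1
    ext t
    rw [map_smul, smul_eq_mul]
  have hm_nonpos : H xm ≤ 0 := by
    rw [hmv]
    apply Finset.sum_nonpos
    intro t _
    exact mul_nonpos_of_nonneg_of_nonpos (hcm t) (le_of_lt (hHm t))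
  have hp_nonneg : 0 ≤ H xp := by
    rw [hpv]
    apply Finset.sum_nonneg
    intro t _
    exact mul_nonneg (hcp t) (le_of_lt (hHp t))
  have hm0 : H xm = 0 := le_antisymm hm_nonpos (h0 ▸ hp_nonneg)
  have hp0 : H xp = 0 := h0 ▸ hm0
  have hcm0 : ∀ t, cm t = 0 := by
    intro t
    by_contra hne
    have hpos : 0 < cm t := lt_of_le_of_ne (hcm t) (Ne.symm hne)
    have hlt : ∑ u, cm u * H (vm u) < ∑ u : Fin nm, (0:ℝ) := by
      apply Finset.sum_lt_sum
      · intro u _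
        exact mul_nonpos_of_nonneg_of_nonpos (hcm u) (le_of_lt (hHm u))
      · exact ⟨t, Finset.mem_univ t, mul_neg_of_pos_of_neg hpos (hHm t)⟩
    rw [← hmv] at hlt
    simp only [Finset.sum_const_zero] at hlt
    linarith [hm0]
  have hcp0 : ∀ t, cp t = 0 := by
    intro t
    by_contra hne
    have hpos : 0 < cp t := lt_of_le_of_ne (hcp t) (Ne.symm hne)
    have hlt : ∑ u : Fin np, (0:ℝ) < ∑ u, cp u * H (vp u) := by
      apply Finset.sum_lt_sum
      · intro u _
        exact mul_nonneg (hcp u) (le_of_lt (hHp u))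
      · exact ⟨t, Finset.mem_univ t, mul_pos hpos (hHp t)⟩
    rw [← hpv] at hlt
    simp only [Finset.sum_const_zero] at hlt
    linarith [hp0]
  constructor
  · rw [hxmval]
    apply Finset.sum_eq_zero
    intro t _
    rw [hcm0 t, zero_smul]
  · rw [hxpval]
    apply Finset.sum_eq_zero
    intro t _
    rw [hcp0 t, zero_smul]

end KMC


open KMC in
set_option maxHeartbeats 2000000 in
/-- Let `w = s_{i₁} ⋯ s_{i_l}` be a reduced expression of an element
`w` of the Weyl group, and `β_k = s_{i₁} ⋯ s_{i_{k-1}}(α_{i_k})`. Then there is a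
convex preorder `⪯` on the set of positive roots such that
`β₁ ≺ β₂ ≺ ⋯ ≺ β_l ≺ γ` for every `γ ∈ Δ₊ ∩ wΔ₊`. -/
theorem exists_convexPreorder_of_reduced_word
    {I : Type*} {V : Type*} [AddCommGroup V] [Module ℝ V]
    (D : KacMoodyData I V)
    (l : ℕ) (i : Fin l → I) (w : V ≃ₗ[ℝ] V)
    (hw : w = D.wordProd i) (hred : D.len w = l)
    (β : Fin l → V)
    (hβ : ∀ k : Fin l,
      β k = D.wordProd (fun j : Fin (k : ℕ) => i (Fin.castLE k.2.le j)) (D.α (i k))) :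
    ∃ le : V → V → Prop,
      IsConvexPreorder D.posRoots le ∧
      (∀ k j : Fin l, k < j → le (β k) (β j) ∧ ¬ le (β j) (β k)) ∧
      (∀ γ ∈ D.posRoots, w.symm γ ∈ D.posRoots →
        ∀ k : Fin l, le (β k) γ ∧ ¬ le γ (β k)) := by
  classical
  set c : List I := List.ofFn i with hcdef
  have hclen : c.length = l := by simp [hcdef]
  have hwc : w = lp D c := by rw [hw, wordProd_eq_lp]
  have hredc : D.len (lp D c) = c.length := by rw [← hwc, hred, hclen]
  have hgetc : ∀ (k : Fin l) (hk : (k:ℕ) < c.length), c.get ⟨k, hk⟩ = i k := by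
    intro k hk
    simp [hcdef]
  have htakec : ∀ k : Fin l, c.take (k:ℕ) = List.ofFn (fun j : Fin (k : ℕ) => i (Fin.castLE k.2.le j)) := by
    intro k
    apply List.ext_getElem
    · simp [hcdef]
    · intro n h1 h2
      simp [hcdef, List.getElem_take, List.getElem_ofFn]
  have hβc : ∀ k : Fin l, β k = lp D (c.take (k:ℕ)) (D.α (c.get ⟨(k:ℕ), by rw [hclen]; exact k.2⟩)) := by
    intro k
    rw [hβ k, wordProd_eq_lp, ← htakec k, hgetc]
  set Af : ℕ → V →ₗ[ℝ] ℝ := fun p => (ht D).comp ((lp D (c.take p)).symm : V →ₗ[ℝ] V) with hAfdef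
  have hAfapp : ∀ p x, Af p x = ht D ((lp D (c.take p)).symm x) := fun p x => rfl
  have hβP : ∀ k : Fin l, β k ∈ D.posRoots := by
    intro k
    rw [hβc k]
    exact bvec_pos D c hredc k (by rw [hclen]; exact k.2)
  have hApos : ∀ (k : Fin l) (p : ℕ), p ≤ (k:ℕ) → 1 ≤ Af p (β k) := by
    intro k p hp
    rw [hβc k, hAfapp]
    exact ht_pos D (R1pos D c hredc k (by rw [hclen]; exact k.2) p hp)
  have hAneg : ∀ (k : Fin l) (p : ℕ), (k:ℕ) < p → p ≤ l → Af p (β k) ≤ -1 := by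
    intro k p h1 h2
    rw [hβc k, hAfapp]
    have hneg := R1neg D c hredc k (by rw [hclen]; exact k.2) p h1 (by rw [hclen]; exact h2)
    have h3 := ht_pos D hneg
    rw [map_neg] at h3
    linarith
  have hAtail : ∀ γ, γ ∈ D.posRoots → w.symm γ ∈ D.posRoots → ∀ p, p ≤ l → 1 ≤ Af p γ := by
    intro γ h1 h2 p hp
    rw [hAfapp]
    apply ht_pos D
    apply R2tail D c hredc h1 _ p (by rw [hclen]; exact hp)
    rw [← hwc]
    exact h2
  set S : V → Set ℕ := fun x => {p | p ≤ l ∧ Af p x ≤ 0} with hSdef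
  set ψ : V → ℝ := fun x =>
    if h : (S x).Nonempty then
      ((sInf (S x) : ℕ) : ℝ) - 1 + Af (sInf (S x) - 1) x / (Af (sInf (S x) - 1) x - Af (sInf (S x)) x)
    else (l : ℝ) + Af l x / ht D x
    with hψdef
  have hSmem : ∀ x p, p ∈ S x ↔ (p ≤ l ∧ Af p x ≤ 0) := by
    intro x p
    rw [hSdef]
    rfl
  have hSβne : ∀ k : Fin l, ((k:ℕ)+1) ∈ S (β k) := by
    intro k
    rw [hSmem]
    exact ⟨k.2, by linarith [hAneg k ((k:ℕ)+1) (by omega) k.2]⟩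
  have hSβinf : ∀ k : Fin l, sInf (S (β k)) = (k:ℕ)+1 := by
    intro k
    have hne : (S (β k)).Nonempty := ⟨_, hSβne k⟩
    have hmem := Nat.sInf_mem hne
    rw [hSmem] at hmem
    have hlow : (k:ℕ)+1 ≤ sInf (S (β k)) := by
      by_contra hc
      push_neg at hc
      have h1 := hApos k (sInf (S (β k))) (by omega)
      linarith [hmem.2]
    have hup := Nat.sInf_le (hSβne k)
    omega
  have hψβval : ∀ k : Fin l, ψ (β k) = ((k:ℕ):ℝ) +
      Af (k:ℕ) (β k) / (Af (k:ℕ) (β k) - Af ((k:ℕ)+1) (β k)) := by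
    intro k
    rw [hψdef]
    simp only
    rw [dif_pos ⟨_, hSβne k⟩, hSβinf k]
    have he : ((k:ℕ)+1) - 1 = (k:ℕ) := by omega
    rw [he]
    push_cast
    ring
  have hψβlow : ∀ k : Fin l, ((k:ℕ):ℝ) < ψ (β k) := by
    intro k
    rw [hψβval k]
    have h1 := hApos k (k:ℕ) le_rfl
    have h2 := hAneg k ((k:ℕ)+1) (by omega) k.2
    have h3 : 0 < Af (k:ℕ) (β k) / (Af (k:ℕ) (β k) - Af ((k:ℕ)+1) (β k)) :=
      div_pos (by linarith) (by linarith)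
    linarith
  have hψβhigh : ∀ k : Fin l, ψ (β k) < ((k:ℕ):ℝ) + 1 := by
    intro k
    rw [hψβval k]
    have h1 := hApos k (k:ℕ) le_rfl
    have h2 := hAneg k ((k:ℕ)+1) (by omega) k.2
    have h3 : Af (k:ℕ) (β k) / (Af (k:ℕ) (β k) - Af ((k:ℕ)+1) (β k)) < 1 := by
      rw [div_lt_one (by linarith)]
      linarith
    linarith
  have hψtailval : ∀ γ, (∀ p, p ≤ l → 1 ≤ Af p γ) → ψ γ = (l:ℝ) + Af l γ / ht D γ := by
    intro γ hA
    have hSempty : ¬ (S γ).Nonempty := by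
      rintro ⟨p, hp⟩
      rw [hSmem] at hp
      linarith [hA p hp.1]
    rw [hψdef]
    simp only
    rw [dif_neg hSempty]
  have hψtaillow : ∀ γ, γ ∈ D.posRoots → (∀ p, p ≤ l → 1 ≤ Af p γ) → (l:ℝ) < ψ γ := by
    intro γ hγ hA
    rw [hψtailval γ hA]
    have ha := hA l le_rfl
    have hb := ht_pos D hγ
    have : 0 < Af l γ / ht D γ := div_pos (by linarith) (by linarith)
    linarith
  have hdichot : ∀ x, x ∈ D.posRoots → (∀ p, p ≤ l → 1 ≤ Af p x) ∨ ∃ k : Fin l, x = β k := by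
    intro x hx
    by_cases hS : (S x).Nonempty
    · right
      have hmem := Nat.sInf_mem hS
      rw [hSmem] at hmem
      obtain ⟨hKl, hKneg⟩ := hmem
      have hroot := symm_root D (c.take (sInf (S x))) (Or.inl hx)
      have hneg : (lp D (c.take (sInf (S x)))).symm x ∈ NegR D := by
        rcases hroot with h | h
        · exfalso
          have h5 := ht_pos D h
          rw [← hAfapp] at h5
          linarith
        · exact h
      have hbet := noGhost D (c.take (sInf (S x))) hx hneg
      obtain ⟨k, hk, hval⟩ := betas_to_bvec D (c.take (sInf (S x))) hbet
      have hkK : k < sInf (S x) := by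
        simp only [List.length_take, lt_min_iff] at hk
        exact hk.1
      have hkc : k < c.length := by
        simp only [List.length_take, lt_min_iff] at hk
        exact hk.2
      have hkl : k < l := by omega
      refine ⟨⟨k, hkl⟩, ?_⟩
      have htake2 : (c.take (sInf (S x))).take k = c.take k := by
        rw [List.take_take]
        congr 1
        omega
      have hget2 : (c.take (sInf (S x))).get ⟨k, hk⟩ = c.get ⟨k, hkc⟩ := by
        simp [List.get_eq_getElem, List.getElem_take]
      rw [htake2, hget2] at hval
      rw [hβc ⟨k, hkl⟩]
      exact hval
    · left
      intro p hp
      rcases symm_root D (c.take p) (Or.inl hx) with h | h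
      · rw [hAfapp]
        exact ht_pos D h
      · exfalso
        have h6 := ht_pos D h
        rw [map_neg] at h6
        exact hS ⟨p, (hSmem x p).mpr ⟨hp, by rw [hAfapp]; linarith⟩⟩
  have key : ∀ x, x ∈ D.posRoots → ∃ H : V →ₗ[ℝ] ℝ, ∀ y ∈ D.posRoots,
      (ψ y < ψ x → H y < 0) ∧ (ψ y = ψ x → H y = 0) ∧ (ψ x < ψ y → 0 < H y) := by
    intro x hx
    rcases hdichot x hx with htl | ⟨k, rfl⟩
    · refine ⟨(ht D x) • Af l - (Af l x) • (ht D), ?_⟩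
      intro y hy
      have hHy : ((ht D x) • Af l - (Af l x) • (ht D)) y = ht D x * Af l y - Af l x * ht D y := by
        simp [LinearMap.sub_apply, LinearMap.smul_apply, smul_eq_mul]
      have hψx := hψtailval x htl
      have hbx := ht_pos D hx
      have hax := htl l le_rfl
      rcases hdichot y hy with htly | ⟨k', rfl⟩
      · have hψy := hψtailval y htly
        have hby := ht_pos D hy
        have hay := htly l le_rfl
        rw [hHy, hψx, hψy]
        refine ⟨?_, ?_, ?_⟩
        · intro h
          have h2 : Af l y / ht D y < Af l x / ht D x := by linarith
          rw [div_lt_div_iff₀ (by linarith) (by linarith)] at h2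
          linarith
        · intro h
          have h2 : Af l y / ht D y = Af l x / ht D x := by linarith
          rw [div_eq_div_iff (by linarith) (by linarith)] at h2
          linarith
        · intro h
          have h2 : Af l x / ht D x < Af l y / ht D y := by linarith
          rw [div_lt_div_iff₀ (by linarith) (by linarith)] at h2
          linarith
      · have h1 := hψβhigh k'
        have h2 := hψtaillow x hx htl
        have hk'l : ((k':ℕ):ℝ) + 1 ≤ (l:ℝ) := by exact_mod_cast k'.2
        have hylt : ψ (β k') < ψ x := by linarith
        have hAly := hAneg k' l k'.2 le_rfl
        have hhty := ht_pos D hy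
        refine ⟨fun _ => ?_, fun h => absurd h (by linarith), fun h => absurd h (by linarith)⟩
        rw [hHy]
        nlinarith
    · have hu := hApos k (k:ℕ) le_rfl
      have hv := hAneg k ((k:ℕ)+1) (by omega) k.2
      refine ⟨(-(Af ((k:ℕ)+1) (β k))) • Af (k:ℕ) + (Af (k:ℕ) (β k)) • Af ((k:ℕ)+1), ?_⟩
      intro y hy
      have hHy : ∀ z, ((-(Af ((k:ℕ)+1) (β k))) • Af (k:ℕ) + (Af (k:ℕ) (β k)) • Af ((k:ℕ)+1)) z
          = (-(Af ((k:ℕ)+1) (β k))) * Af (k:ℕ) z + (Af (k:ℕ) (β k)) * Af ((k:ℕ)+1) z := by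
        intro z
        simp [LinearMap.add_apply, LinearMap.smul_apply, smul_eq_mul]
      rcases hdichot y hy with htly | ⟨k', rfl⟩
      · have h1 := hψβhigh k
        have h2 := hψtaillow y hy htly
        have hkl : ((k:ℕ):ℝ) + 1 ≤ (l:ℝ) := by exact_mod_cast k.2
        have hxy : ψ (β k) < ψ y := by linarith
        have hky := htly (k:ℕ) (le_of_lt k.2)
        have hk1y := htly ((k:ℕ)+1) k.2
        refine ⟨fun h => absurd h (by linarith), fun h => absurd h (by linarith), fun _ => ?_⟩
        rw [hHy]
        nlinarith
      · rcases lt_trichotomy (k':ℕ) (k:ℕ) with hlt | heq | hgt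
        · have h1 := hψβhigh k'
          have h2 := hψβlow k
          have hcast : ((k':ℕ):ℝ) + 1 ≤ ((k:ℕ):ℝ) := by exact_mod_cast hlt
          have hxy : ψ (β k') < ψ (β k) := by linarith
          have ha := hAneg k' (k:ℕ) hlt (le_of_lt k.2)
          have hb := hAneg k' ((k:ℕ)+1) (by omega) k.2
          refine ⟨fun _ => ?_, fun h => absurd h (by linarith), fun h => absurd h (by linarith)⟩
          rw [hHy]
          nlinarith
        · have hkk : k' = k := Fin.ext heq
          subst hkk
          refine ⟨fun h => absurd h (lt_irrefl _), fun _ => ?_, fun h => absurd h (lt_irrefl _)⟩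
          rw [hHy]
          ring
        · have h1 := hψβhigh k
          have h2 := hψβlow k'
          have hcast : ((k:ℕ):ℝ) + 1 ≤ ((k':ℕ):ℝ) := by exact_mod_cast hgt
          have hxy : ψ (β k) < ψ (β k') := by linarith
          have ha := hApos k' (k:ℕ) (by omega)
          have hb := hApos k' ((k:ℕ)+1) (by omega)
          refine ⟨fun h => absurd h (by linarith), fun h => absurd h (by linarith), fun _ => ?_⟩
          rw [hHy]
          nlinarith
  refine ⟨fun u v => ψ u ≤ ψ v, ⟨?_, ?_, ?_, ?_⟩, ?_, ?_⟩
  · intro x _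
    exact le_refl _
  · intro x _ y _ z _ h1 h2
    exact le_trans h1 h2
  · intro x _ y _
    exact le_total _ _
  · intro x hx xm hxm xp hxp hspan
    obtain ⟨H, hH⟩ := key x hx
    exact face_generic D.posRoots ψ x H hH xm hxm xp hxp hspan
  · intro k j hkj
    have h1 := hψβhigh k
    have h2 := hψβlow j
    have hnat : (k:ℕ) + 1 ≤ (j:ℕ) := hkj
    have hc : ((k:ℕ):ℝ) + 1 ≤ ((j:ℕ):ℝ) := by exact_mod_cast hnat
    exact ⟨by linarith, fun hcon => by linarith⟩
  · intro γ hγ hγt k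
    have htly : ∀ p, p ≤ l → 1 ≤ Af p γ := hAtail γ hγ hγt
    have h1 := hψβhigh k
    have h2 := hψtaillow γ hγ htly
    have hkl : ((k:ℕ):ℝ) + 1 ≤ (l:ℝ) := by exact_mod_cast k.2
    exact ⟨by linarith, fun hcon => by linarith⟩
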